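/- Let Δ be of type B, C, F₄, or G₂ with highest root θ, ⌊θ/2⌋ = Σ_α ⌊ht_α(θ)/2⌋ α and ⌈θ/2⌉ = θ − ⌊θ/2⌋. Then the interval {γ ∈ Δ⁺ : ⌊θ/2⌋ ≼ γ ≼ ⌈θ/2⌉} equals exactly {⌊θ/2⌋, ⌈θ/2⌉}, and ht(⌈θ/2⌉) = h/2 where h is the Coxeter number. -/

import Mathlib

open scoped RealInnerProductSpace

/-- Combinatorial data of the set of positive roots of a (reduced, irreducible,
crystallographic) root system of a simple Lie algebra, with a chosen set of
simple roots, sitting in a real inner product space `V`. -/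
structure SimpleRS (V : Type*) [NormedAddCommGroup V] [InnerProductSpace ℝ V] where
  /-- the positive roots Δ⁺ -/
  pos : Finset V
  /-- the simple roots Π -/
  simple : Finset V
  simple_sub : simple ⊆ pos
  indep : LinearIndependent ℝ (fun α : {x // x ∈ simple} => (α : V))
  root_ne : ∀ γ ∈ pos, γ ≠ (0 : V)
  /-- `coeff γ α` is the coefficient of the simple root `α` in `γ` -/
  coeff : V → V → ℕ
  coeff_spec : ∀ γ ∈ pos, γ = ∑ α ∈ simple, (coeff γ α : ℝ) • α
  /-- the reflection of a root in a root is again a root (positive or negative) -/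
  reflect_mem : ∀ α ∈ pos, ∀ γ ∈ pos,
    (γ - (2 * ⟪γ, α⟫ / ⟪α, α⟫) • α ∈ pos ∨ -(γ - (2 * ⟪γ, α⟫ / ⟪α, α⟫) • α) ∈ pos)
  crystallographic : ∀ α ∈ pos, ∀ γ ∈ pos, ∃ z : ℤ, 2 * ⟪γ, α⟫ / ⟪α, α⟫ = (z : ℝ)
  reduced : ∀ α ∈ pos, (2 : ℝ) • α ∉ pos
  /-- irreducibility: the Dynkin diagram is connected -/
  irreducible : ∀ S ⊆ simple, (∀ α ∈ S, ∀ β ∈ simple, β ∉ S → ⟪α, β⟫ = 0) →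
      S = ∅ ∨ S = simple
  /-- the highest root θ -/
  highest : V
  highest_mem : highest ∈ pos
  highest_spec : ∀ γ ∈ pos, ∃ c : V → ℕ, highest - γ = ∑ α ∈ simple, (c α : ℝ) • α

namespace SimpleRS

variable {V : Type*} [NormedAddCommGroup V] [InnerProductSpace ℝ V] (R : SimpleRS V)

/-- the root order: `μ ≼ ν` iff `ν − μ` is a nonnegative integral combination
of simple roots -/
def rle (μ ν : V) : Prop := ∃ c : V → ℕ, ν - μ = ∑ α ∈ R.simple, (c α : ℝ) • α

/-- the support of a root: simple roots occurring with nonzero coefficient -/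
def supp (γ : V) : Set V := {α | α ∈ R.simple ∧ R.coeff γ α ≠ 0}

/-- the height of a root -/
def ht (γ : V) : ℕ := ∑ α ∈ R.simple, R.coeff γ α

/-- the root system is of type `A_n`: its Dynkin diagram is a simply laced chain -/
def IsTypeA : Prop :=
  ∃ (n : ℕ) (e : Fin n ≃ {x // x ∈ R.simple}),
    (∀ i j : Fin n, ⟪(e i : V), (e j : V)⟫ ≠ 0 ↔ ((i : ℤ) - (j : ℤ)).natAbs ≤ 1) ∧
    (∀ i j : Fin n, ‖(e i : V)‖ = ‖(e j : V)‖)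

/-- all roots have the same length -/
def SimplyLaced : Prop := ∀ α ∈ R.pos, ∀ β ∈ R.pos, ‖α‖ = ‖β‖

/-- a positive root `γ` is commutative if the upper ideal it generates is abelian,
i.e. no two of its elements sum to a root -/
def IsCom (γ : V) : Prop :=
  ∀ ν₁ ∈ R.pos, ∀ ν₂ ∈ R.pos, R.rle γ ν₁ → R.rle γ ν₂ →
    ν₁ + ν₂ ∉ R.pos ∧ -(ν₁ + ν₂) ∉ R.pos

/-- the coefficientwise floor `⌊θ/2⌋` of half the highest root -/
def floorTheta : V := ∑ α ∈ R.simple, ((R.coeff R.highest α / 2 : ℕ) : ℝ) • α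

end SimpleRS

namespace SimpleRS

open Classical in
/-- dummy -/
lemma _dummy : True := trivial

section Lemmas

open Classical

variable {V : Type*} [NormedAddCommGroup V] [InnerProductSpace ℝ V] (R : SimpleRS V)

/-- coefficient uniqueness for real coefficient functions -/
lemma eq_coeffs {f g : V → ℝ}
    (h : ∑ α ∈ R.simple, f α • α = ∑ α ∈ R.simple, g α • α) :
    ∀ α ∈ R.simple, f α = g α := by
  have h0 : ∑ α ∈ R.simple, (f α - g α) • α = 0 := by
    have : ∑ α ∈ R.simple, (f α - g α) • α
        = ∑ α ∈ R.simple, f α • α - ∑ α ∈ R.simple, g α • α := by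
      rw [← Finset.sum_sub_distrib]
      exact Finset.sum_congr rfl (fun α _ => sub_smul (f α) (g α) α)
    rw [this, h, sub_self]
  have h1 : ∑ i : {x // x ∈ R.simple}, (f i.1 - g i.1) • (i.1 : V) = 0 := by
    rw [Finset.sum_coe_sort R.simple (fun α => (f α - g α) • α)]
    exact h0
  intro α hα
  have h2 := linearIndependent_iff'.mp R.indep Finset.univ
    (fun i => f i.1 - g i.1) (by simpa using h1) ⟨α, hα⟩ (Finset.mem_univ _)
  have h3 : f α - g α = 0 := by simpa using h2
  linarith

lemma coeff_unique {γ : V} (hγ : γ ∈ R.pos) {f : V → ℝ}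
    (h : γ = ∑ α ∈ R.simple, f α • α) :
    ∀ α ∈ R.simple, f α = (R.coeff γ α : ℝ) :=
  R.eq_coeffs (h ▸ R.coeff_spec γ hγ)

lemma inner_self_pos' {γ : V} (hγ : γ ∈ R.pos) : 0 < ⟪γ, γ⟫ := by
  rcases (real_inner_self_nonneg (x := γ)).lt_or_eq with h1 | h1
  · exact h1
  · exact absurd (inner_self_eq_zero.mp h1.symm) (R.root_ne γ hγ)

lemma inner_expand {γ : V} (hγ : γ ∈ R.pos) (x : V) :
    ⟪x, γ⟫ = ∑ α ∈ R.simple, (R.coeff γ α : ℝ) * ⟪x, α⟫ := by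
  conv_lhs => rw [R.coeff_spec γ hγ]
  rw [inner_sum]
  exact Finset.sum_congr rfl (fun α _ => real_inner_smul_right x α _)

/-- `-(γ + t•α)` can never be a positive root when `t ≥ 0`. -/
lemma not_neg_mem {γ : V} (hγ : γ ∈ R.pos) {α : V} (hα : α ∈ R.simple)
    {t : ℝ} (ht : 0 ≤ t) (h : -(γ + t • α) ∈ R.pos) : False := by
  set x := -(γ + t • α) with hx
  have hxe := R.coeff_spec x h
  have hγe := R.coeff_spec γ hγ
  have key : ∀ β ∈ R.simple,
      (R.coeff γ β : ℝ) + t * (if β = α then 1 else 0) + (R.coeff x β : ℝ) = 0 := by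
    have hsum : ∑ β ∈ R.simple,
        ((R.coeff γ β : ℝ) + t * (if β = α then 1 else 0) + (R.coeff x β : ℝ)) • β
        = ∑ β ∈ R.simple, (0:ℝ) • β := by
      have e1 : ∑ β ∈ R.simple,
          ((R.coeff γ β : ℝ) + t * (if β = α then 1 else 0) + (R.coeff x β : ℝ)) • β
          = (∑ β ∈ R.simple, (R.coeff γ β : ℝ) • β)
            + (∑ β ∈ R.simple, (t * (if β = α then 1 else 0)) • β)
            + (∑ β ∈ R.simple, (R.coeff x β : ℝ) • β) := by
        rw [← Finset.sum_add_distrib, ← Finset.sum_add_distrib]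
        exact Finset.sum_congr rfl (fun β _ => by rw [add_smul, add_smul])
      have e2 : ∑ β ∈ R.simple, (t * (if β = α then 1 else 0)) • β = t • α := by
        rw [Finset.sum_eq_single α]
        · simp
        · intro β _ hβ; simp [hβ]
        · intro hc; exact absurd hα hc
      rw [e1, e2, ← hγe, ← hxe]
      have : ∑ β ∈ R.simple, (0:ℝ) • β = 0 := by simp
      rw [this, hx]
      abel
    have := R.eq_coeffs hsum
    intro β hβ
    simpa using this β hβ
  have hγ0 : ∀ β ∈ R.simple, (R.coeff γ β : ℝ) = 0 := by
    intro β hβ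
    have hk := key β hβ
    have h1 : (0:ℝ) ≤ (R.coeff γ β : ℝ) := Nat.cast_nonneg _
    have h2 : (0:ℝ) ≤ t * (if β = α then 1 else 0) := by
      by_cases hb : β = α <;> simp [hb, ht]
    have h3 : (0:ℝ) ≤ (R.coeff x β : ℝ) := Nat.cast_nonneg _
    linarith
  have : γ = 0 := by
    rw [hγe]
    exact Finset.sum_eq_zero (fun β hβ => by rw [hγ0 β hβ, zero_smul])
  exact R.root_ne γ hγ this

lemma single_sum {α : V} (hα : α ∈ R.simple) (t : ℝ) :
    ∑ β ∈ R.simple, (t * if β = α then 1 else 0) • β = t • α := by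
  rw [Finset.sum_eq_single α]
  · simp
  · intro β _ hβ; simp [hβ]
  · intro hc; exact absurd hα hc

lemma pairingz {α γ : V} (hα : α ∈ R.pos) (hγ : γ ∈ R.pos) :
    ∃ z : ℤ, 2 * ⟪γ, α⟫ = (z : ℝ) * ⟪α, α⟫ := by
  obtain ⟨z, hz⟩ := R.crystallographic α hα γ hγ
  exact ⟨z, by
    have h0 : ⟪α, α⟫ ≠ 0 := ne_of_gt (R.inner_self_pos' hα)
    field_simp at hz
    linarith⟩

lemma reflect_mem_z {α γ : V} (hα : α ∈ R.pos) (hγ : γ ∈ R.pos) {z : ℤ}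
    (hz : 2 * ⟪γ, α⟫ = (z : ℝ) * ⟪α, α⟫) :
    γ - (z : ℝ) • α ∈ R.pos ∨ -(γ - (z : ℝ) • α) ∈ R.pos := by
  have h0 : ⟪α, α⟫ ≠ 0 := ne_of_gt (R.inner_self_pos' hα)
  have : 2 * ⟪γ, α⟫ / ⟪α, α⟫ = (z : ℝ) := by
    rw [div_eq_iff h0]; linarith
  have h := R.reflect_mem α hα γ hγ
  rwa [this] at h

/-- if `-(γ - t•α)` is a positive root for a simple root `α`, then `γ` is a
multiple of `α`. -/
lemma neg_sub_mult {γ α : V} (hγ : γ ∈ R.pos) (hα : α ∈ R.simple) {t : ℝ}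
    (h : -(γ - t • α) ∈ R.pos) : ∃ s : ℝ, γ = s • α := by
  set x := -(γ - t • α) with hx
  have hxe := R.coeff_spec x h
  have hγe := R.coeff_spec γ hγ
  have key : ∀ β ∈ R.simple,
      (R.coeff γ β : ℝ) + (R.coeff x β : ℝ) = t * (if β = α then 1 else 0) := by
    have hsum : ∑ β ∈ R.simple, ((R.coeff γ β : ℝ) + (R.coeff x β : ℝ)) • β
        = ∑ β ∈ R.simple, (t * (if β = α then 1 else 0)) • β := by
      rw [R.single_sum hα t]
      have e1 : ∑ β ∈ R.simple, ((R.coeff γ β : ℝ) + (R.coeff x β : ℝ)) • β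
          = (∑ β ∈ R.simple, (R.coeff γ β : ℝ) • β)
            + (∑ β ∈ R.simple, (R.coeff x β : ℝ) • β) := by
        rw [← Finset.sum_add_distrib]
        exact Finset.sum_congr rfl (fun β _ => add_smul _ _ β)
      rw [e1, ← hγe, ← hxe, hx]
      abel
    exact R.eq_coeffs hsum
  refine ⟨(R.coeff γ α : ℝ), ?_⟩
  have hz : ∀ β ∈ R.simple, β ≠ α → (R.coeff γ β : ℝ) = 0 := by
    intro β hβ hne
    have hk := key β hβ
    rw [if_neg hne, mul_zero] at hk
    have h1 : (0:ℝ) ≤ (R.coeff γ β : ℝ) := Nat.cast_nonneg _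
    have h3 : (0:ℝ) ≤ (R.coeff x β : ℝ) := Nat.cast_nonneg _
    linarith
  conv_lhs => rw [hγe]
  rw [Finset.sum_eq_single α]
  · intro β hβ hne; rw [hz β hβ hne, zero_smul]
  · intro hc; exact absurd hα hc

/-- two positive roots, one a scalar multiple of the other, are equal -/
lemma eq_of_smul {γ δ : V} (hγ : γ ∈ R.pos) (hδ : δ ∈ R.pos) {s : ℝ}
    (h : γ = s • δ) : γ = δ := by
  have hδδ : 0 < ⟪δ, δ⟫ := R.inner_self_pos' hδ
  have hγγ : 0 < ⟪γ, γ⟫ := R.inner_self_pos' hγ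
  have hγδ : ⟪γ, δ⟫ = s * ⟪δ, δ⟫ := by rw [h, real_inner_smul_left]
  have hγγ' : ⟪γ, γ⟫ = s * s * ⟪δ, δ⟫ := by
    rw [h, real_inner_smul_left, real_inner_smul_right]; ring
  have hs0 : s ≠ 0 := by
    intro h0
    rw [h0] at hγγ'
    norm_num at hγγ'
    exact R.root_ne γ hγ hγγ'
  -- s > 0 from coefficients
  have hspos : 0 < s := by
    have hδe := R.coeff_spec δ hδ
    have hγe : γ = ∑ β ∈ R.simple, (s * (R.coeff δ β : ℝ)) • β := by
      rw [h]
      conv_lhs => rw [hδe]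
      rw [Finset.smul_sum]
      exact Finset.sum_congr rfl (fun β _ => smul_smul s _ β)
    have hu := R.coeff_unique hγ hγe
    by_contra hns
    push_neg at hns
    have hall : ∀ β ∈ R.simple, (R.coeff δ β : ℝ) = 0 := by
      intro β hβ
      rcases (Nat.cast_nonneg (R.coeff δ β) : (0:ℝ) ≤ _).lt_or_eq with h1 | h1
      · exfalso
        have h2 := hu β hβ
        have h3 : (0:ℝ) ≤ (R.coeff γ β : ℝ) := Nat.cast_nonneg _
        nlinarith [lt_of_le_of_ne hns hs0]
      · exact h1.symm
    have : δ = 0 := by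
      rw [hδe]
      exact Finset.sum_eq_zero (fun β hβ => by rw [hall β hβ, zero_smul])
    exact R.root_ne δ hδ this
  obtain ⟨z1, hz1⟩ := R.pairingz hδ hγ
  obtain ⟨z2, hz2⟩ := R.pairingz hγ hδ
  rw [hγδ] at hz1
  have e1 : (z1 : ℝ) = 2 * s := by
    have h2 : (z1:ℝ) * ⟪δ,δ⟫ = (2*s) * ⟪δ,δ⟫ := by linarith
    have := mul_right_cancel₀ (ne_of_gt hδδ) h2
    linarith
  have hδγ : ⟪δ, γ⟫ = s * ⟪δ, δ⟫ := by rw [real_inner_comm]; exact hγδ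
  rw [hδγ, hγγ'] at hz2
  have e2 : (z2 : ℝ) * s = 2 := by
    have hposs : (0:ℝ) < s * ⟪δ,δ⟫ := by positivity
    have h2 : ((z2:ℝ)*s) * (s * ⟪δ,δ⟫) = 2 * (s * ⟪δ,δ⟫) := by
      linear_combination - hz2
    have := mul_right_cancel₀ (ne_of_gt hposs) h2
    linarith
  have hz1z2 : z1 * z2 = 4 := by
    have : ((z1 * z2 : ℤ) : ℝ) = 4 := by push_cast; nlinarith [e1, e2]
    exact_mod_cast this
  have hz1pos : 0 < z1 := by
    have : (0:ℝ) < (z1:ℝ) := by rw [e1]; positivity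
    exact_mod_cast this
  have hz2pos : 0 < z2 := by
    have : (0:ℝ) < (z2:ℝ) := by nlinarith [e2, hspos]
    exact_mod_cast this
  have hz1le : z1 ≤ 4 := by nlinarith
  interval_cases z1
  · -- z1 = 1 : s = 1/2, δ = 2γ
    exfalso
    have hs : s = 1/2 := by norm_num at e1; linarith
    have : δ = (2:ℝ) • γ := by rw [h, hs, smul_smul]; norm_num
    exact R.reduced γ hγ (this ▸ hδ)
  · -- z1 = 2 : s = 1
    have hs : s = 1 := by norm_num at e1; linarith
    rw [h, hs, one_smul]
  · omega
  · -- z1 = 4 : s = 2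
    exfalso
    have hs : s = 2 := by norm_num at e1; linarith
    rw [hs] at h
    exact R.reduced δ hδ (h ▸ hγ)

lemma reflect_pos {γ α : V} (hγ : γ ∈ R.pos) (hα : α ∈ R.simple) (hne : γ ≠ α)
    {z : ℤ} (hz : 2 * ⟪γ, α⟫ = (z:ℝ) * ⟪α, α⟫) : γ - (z:ℝ) • α ∈ R.pos := by
  rcases R.reflect_mem_z (R.simple_sub hα) hγ hz with h | h
  · exact h
  · obtain ⟨s, hs⟩ := R.neg_sub_mult hγ hα h
    exact absurd (R.eq_of_smul hγ (R.simple_sub hα) hs) hne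

lemma sub_smul_expand {γ δ : V} (hγ : γ ∈ R.pos) (hδ : δ ∈ R.pos) (t : ℝ) :
    γ - t • δ = ∑ β ∈ R.simple, ((R.coeff γ β : ℝ) - t * (R.coeff δ β : ℝ)) • β := by
  conv_lhs => rw [R.coeff_spec γ hγ, R.coeff_spec δ hδ]
  rw [Finset.smul_sum, ← Finset.sum_sub_distrib]
  exact Finset.sum_congr rfl (fun β _ => by rw [sub_smul, mul_smul])

lemma sub_smul_simple_expand {γ α : V} (hγ : γ ∈ R.pos) (hα : α ∈ R.simple) (t : ℝ) :
    γ - t • α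
      = ∑ β ∈ R.simple, ((R.coeff γ β : ℝ) - t * (if β = α then 1 else 0)) • β := by
  have h1 : ∑ β ∈ R.simple, ((R.coeff γ β : ℝ) - t * (if β = α then 1 else 0)) • β
      = (∑ β ∈ R.simple, (R.coeff γ β : ℝ) • β)
        - ∑ β ∈ R.simple, (t * (if β = α then 1 else 0)) • β := by
    rw [← Finset.sum_sub_distrib]
    exact Finset.sum_congr rfl (fun β _ => sub_smul _ _ β)
  rw [h1, R.single_sum hα t, ← R.coeff_spec γ hγ]

lemma coeff_shift {γ γ' α : V} (hγ : γ ∈ R.pos) (hγ' : γ' ∈ R.pos)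
    (hα : α ∈ R.simple) {t : ℝ} (h : γ' = γ - t • α) :
    ∀ β ∈ R.simple, (R.coeff γ' β : ℝ)
      = (R.coeff γ β : ℝ) - t * (if β = α then 1 else 0) := by
  intro β hβ
  exact (R.coeff_unique hγ' (h.trans (R.sub_smul_simple_expand hγ hα t)) β hβ).symm

lemma ht_cast (γ : V) : (R.ht γ : ℝ) = ∑ β ∈ R.simple, (R.coeff γ β : ℝ) := by
  unfold ht
  push_cast
  rfl

lemma sum_indicator {α : V} (hα : α ∈ R.simple) (t : ℝ) :
    ∑ β ∈ R.simple, (t * if β = α then 1 else 0) = t := by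
  rw [Finset.sum_eq_single α]
  · simp
  · intro β _ hβ; simp [hβ]
  · intro hc; exact absurd hα hc

lemma ht_shift {γ γ' α : V} (hγ : γ ∈ R.pos) (hγ' : γ' ∈ R.pos)
    (hα : α ∈ R.simple) {t : ℝ} (h : γ' = γ - t • α) :
    (R.ht γ' : ℝ) = (R.ht γ : ℝ) - t := by
  rw [R.ht_cast, R.ht_cast]
  have := R.coeff_shift hγ hγ' hα h
  rw [Finset.sum_congr rfl this, Finset.sum_sub_distrib, R.sum_indicator hα t]

lemma coeff_le_highest {γ : V} (hγ : γ ∈ R.pos) :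
    ∀ β ∈ R.simple, (R.coeff γ β : ℝ) ≤ (R.coeff R.highest β : ℝ) := by
  obtain ⟨c, hc⟩ := R.highest_spec γ hγ
  have hθ : R.highest = ∑ β ∈ R.simple, ((R.coeff γ β : ℝ) + (c β : ℝ)) • β := by
    have : R.highest = γ + ∑ β ∈ R.simple, (c β : ℝ) • β := by
      rw [← hc]; abel
    rw [this]
    conv_lhs => rw [R.coeff_spec γ hγ]
    rw [← Finset.sum_add_distrib]
    exact Finset.sum_congr rfl (fun β _ => (add_smul _ _ β).symm)
  intro β hβ
  have := R.coeff_unique R.highest_mem hθ β hβ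
  have hc0 : (0:ℝ) ≤ (c β : ℝ) := Nat.cast_nonneg _
  linarith

lemma exists_coeff_highest_pos : ∃ β ∈ R.simple, 0 < (R.coeff R.highest β : ℝ) := by
  by_contra h
  push_neg at h
  have : R.highest = 0 := by
    rw [R.coeff_spec R.highest R.highest_mem]
    refine Finset.sum_eq_zero (fun β hβ => ?_)
    have h1 := h β hβ
    have h2 : (0:ℝ) ≤ (R.coeff R.highest β : ℝ) := Nat.cast_nonneg _
    have : (R.coeff R.highest β : ℝ) = 0 := le_antisymm h1 h2
    rw [this, zero_smul]
  exact R.root_ne R.highest R.highest_mem this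

lemma theta_dom : ∀ α ∈ R.simple, 0 ≤ ⟪R.highest, α⟫ := by
  intro α hα
  by_contra hneg
  push_neg at hneg
  have hαp := R.simple_sub hα
  obtain ⟨z, hz⟩ := R.pairingz hαp R.highest_mem
  have hαα : 0 < ⟪α, α⟫ := R.inner_self_pos' hαp
  have hzneg : (z:ℝ) < 0 := by nlinarith
  have hform : -(R.highest - (z:ℝ) • α) = -(R.highest + (-(z:ℝ)) • α) := by
    rw [neg_smul, ← sub_eq_add_neg]
  rcases R.reflect_mem_z hαp R.highest_mem hz with h | h
  · obtain ⟨c, hc⟩ := R.highest_spec _ h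
    have hc' : ∑ β ∈ R.simple, ((z:ℝ) * if β = α then 1 else 0) • β
        = ∑ β ∈ R.simple, (c β : ℝ) • β := by
      rw [R.single_sum hα (z:ℝ), ← hc]
      abel
    have h9 := R.eq_coeffs hc' α hα
    simp at h9
    have : (0:ℝ) ≤ (z:ℝ) := by rw [h9]; exact Nat.cast_nonneg _
    linarith
  · rw [hform] at h
    exact R.not_neg_mem R.highest_mem hα (by linarith) h

lemma theta_inner_nonneg {γ : V} (hγ : γ ∈ R.pos) : 0 ≤ ⟪R.highest, γ⟫ := by
  rw [R.inner_expand hγ]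
  refine Finset.sum_nonneg (fun β hβ => ?_)
  exact mul_nonneg (Nat.cast_nonneg _) (R.theta_dom β hβ)

lemma eq_highest {γ : V} (hγ : γ ∈ R.pos)
    (h : ⟪R.highest, R.highest⟫ ≤ ⟪γ, R.highest⟫) : γ = R.highest := by
  have hT : 0 < ⟪R.highest, R.highest⟫ := R.inner_self_pos' R.highest_mem
  obtain ⟨z, hz⟩ := R.pairingz R.highest_mem hγ
  have hz2 : 2 ≤ (z:ℝ) := by nlinarith
  have hz2' : (2:ℤ) ≤ z := by exact_mod_cast hz2
  obtain ⟨β0, hβ0, hβ0pos⟩ := R.exists_coeff_highest_pos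
  have hle := R.coeff_le_highest hγ
  rcases R.reflect_mem_z R.highest_mem hγ hz with hmem | hmem
  · exfalso
    have hx := R.coeff_unique hmem
      (R.sub_smul_expand hγ R.highest_mem (z:ℝ)) β0 hβ0
    have h1 : (0:ℝ) ≤ (R.coeff (γ - (z:ℝ) • R.highest) β0 : ℝ) := Nat.cast_nonneg _
    nlinarith [hle β0 hβ0, hβ0pos, hz2,
      mul_nonneg (by linarith : (0:ℝ) ≤ (z:ℝ) - 2) (le_of_lt hβ0pos)]
  · have hxmem : (z:ℝ) • R.highest - γ ∈ R.pos := by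
      have : -(γ - (z:ℝ) • R.highest) = (z:ℝ) • R.highest - γ := by abel
      rwa [this] at hmem
    -- coefficients of x = z•θ - γ
    have hxexp : (z:ℝ) • R.highest - γ
        = ∑ β ∈ R.simple, ((z:ℝ) * (R.coeff R.highest β : ℝ) - (R.coeff γ β : ℝ)) • β := by
      have h2 := R.sub_smul_expand R.highest_mem hγ 1
      conv_lhs => rw [R.coeff_spec R.highest R.highest_mem, R.coeff_spec γ hγ]
      rw [Finset.smul_sum, ← Finset.sum_sub_distrib]
      exact Finset.sum_congr rfl (fun β _ => by
        rw [sub_smul, smul_smul])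
    have hx := R.coeff_unique hxmem hxexp
    have hxle := R.coeff_le_highest hxmem
    -- z = 2 and coefficients equal
    have hz2eq : z = 2 := by
      have h1 := hx β0 hβ0
      have h2 := hxle β0 hβ0
      have h3 := hle β0 hβ0
      have h4 : (z:ℝ) ≤ 2 := by nlinarith [hβ0pos]
      have : (z:ℤ) ≤ 2 := by exact_mod_cast h4
      omega
    have hz2r : (z:ℝ) = 2 := by rw [hz2eq]; norm_num
    have hcoeff : ∀ β ∈ R.simple, (R.coeff γ β : ℝ) = (R.coeff R.highest β : ℝ) := by
      intro β hβ
      have h1 := hx β hβ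
      have h2 := hxle β hβ
      have h3 := hle β hβ
      have hmul : (z:ℝ) * (R.coeff R.highest β : ℝ) = 2 * (R.coeff R.highest β : ℝ) := by
        rw [hz2r]
      linarith
    rw [R.coeff_spec γ hγ, R.coeff_spec R.highest R.highest_mem]
    exact Finset.sum_congr rfl (fun β hβ => by rw [hcoeff β hβ])

lemma refl_norm {γ α : V} {z : ℤ} (hz : 2 * ⟪γ, α⟫ = (z:ℝ) * ⟪α, α⟫) :
    ⟪γ - (z:ℝ) • α, γ - (z:ℝ) • α⟫ = ⟪γ, γ⟫ := by
  have expand : ⟪γ - (z:ℝ) • α, γ - (z:ℝ) • α⟫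
      = ⟪γ, γ⟫ - 2*(z:ℝ)*⟪γ, α⟫ + (z:ℝ)^2 * ⟪α, α⟫ := by
    simp only [inner_sub_left, inner_sub_right, real_inner_smul_left,
      real_inner_smul_right]
    rw [real_inner_comm α γ]
    ring
  rw [expand]
  linear_combination (-(z:ℝ)) * hz

lemma bump {γ : V} (hγ : γ ∈ R.pos) (hle : ⟪R.highest, γ⟫ ≤ 0) :
    ∃ γ' ∈ R.pos, ⟪γ', γ'⟫ = ⟪γ, γ⟫ ∧ R.ht γ < R.ht γ' := by
  have hγγ : 0 < ⟪γ, γ⟫ := R.inner_self_pos' hγ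
  obtain ⟨c, hc⟩ := R.highest_spec γ hγ
  have hkey : ∑ β ∈ R.simple, (c β : ℝ) * ⟪γ, β⟫ < 0 := by
    have h1 : ⟪γ, R.highest - γ⟫ = ∑ β ∈ R.simple, (c β : ℝ) * ⟪γ, β⟫ := by
      rw [hc, inner_sum]
      exact Finset.sum_congr rfl (fun β _ => real_inner_smul_right γ β _)
    rw [← h1, inner_sub_right]
    have : ⟪γ, R.highest⟫ ≤ 0 := by rwa [real_inner_comm]
    linarith
  have hex : ∃ α ∈ R.simple, ⟪γ, α⟫ < 0 := by
    by_contra hno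
    push_neg at hno
    have : 0 ≤ ∑ β ∈ R.simple, (c β : ℝ) * ⟪γ, β⟫ :=
      Finset.sum_nonneg (fun β hβ => mul_nonneg (Nat.cast_nonneg _) (hno β hβ))
    linarith
  obtain ⟨α, hα, hinn⟩ := hex
  obtain ⟨z, hz⟩ := R.pairingz (R.simple_sub hα) hγ
  have hαα : 0 < ⟪α, α⟫ := R.inner_self_pos' (R.simple_sub hα)
  have hzneg : (z:ℝ) < 0 := by nlinarith
  have hmem : γ - (z:ℝ) • α ∈ R.pos := by
    rcases R.reflect_mem_z (R.simple_sub hα) hγ hz with h | h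
    · exact h
    · exfalso
      have hform : -(γ - (z:ℝ) • α) = -(γ + (-(z:ℝ)) • α) := by
        rw [neg_smul, ← sub_eq_add_neg]
      rw [hform] at h
      exact R.not_neg_mem hγ hα (by linarith) h
  refine ⟨γ - (z:ℝ) • α, hmem, refl_norm hz, ?_⟩
  have hhts := R.ht_shift hγ hmem hα rfl
  have : (R.ht γ : ℝ) < (R.ht (γ - (z:ℝ) • α) : ℝ) := by
    rw [hhts]; linarith
  exact_mod_cast this

lemma theta_long {γ : V} (hγ : γ ∈ R.pos) :
    ⟪γ, γ⟫ ≤ ⟪R.highest, R.highest⟫ := by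
  by_contra hlong
  push_neg at hlong
  set T := ⟪R.highest, R.highest⟫ with hT
  have hTpos : 0 < T := R.inner_self_pos' R.highest_mem
  set M := R.pos.filter (fun x => T < ⟪x, x⟫) with hM
  have hMne : M.Nonempty := ⟨γ, Finset.mem_filter.mpr ⟨hγ, hlong⟩⟩
  obtain ⟨δ, hδM, hδmax⟩ := Finset.exists_max_image M R.ht hMne
  have hδpos : δ ∈ R.pos := (Finset.mem_filter.mp hδM).1
  have hδlong : T < ⟪δ, δ⟫ := (Finset.mem_filter.mp hδM).2
  rcases le_or_gt ⟪R.highest, δ⟫ 0 with hc | hc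
  · obtain ⟨δ', hδ'pos, hδ'norm, hδ'ht⟩ := R.bump hδpos hc
    have : δ' ∈ M := Finset.mem_filter.mpr ⟨hδ'pos, by rw [hδ'norm]; exact hδlong⟩
    exact absurd (hδmax δ' this) (not_le.mpr hδ'ht)
  · obtain ⟨z1, hz1⟩ := R.pairingz R.highest_mem hδpos
    obtain ⟨z2, hz2⟩ := R.pairingz hδpos R.highest_mem
    have hz2pos : (1:ℝ) ≤ (z2:ℝ) := by
      have : (0:ℝ) < (z2:ℝ) := by nlinarith [real_inner_comm R.highest δ]
      have : (0:ℤ) < z2 := by exact_mod_cast this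
      exact_mod_cast this
    have hz2posZ : (0:ℤ) < z2 := by
      have : (0:ℝ) < (z2:ℝ) := by nlinarith [real_inner_comm R.highest δ]
      exact_mod_cast this
    have hδθ : ⟪δ, R.highest⟫ = ⟪R.highest, δ⟫ := real_inner_comm _ _
    have hkey : (z2:ℝ) * T < (z2:ℝ) * ⟪δ, δ⟫ := by nlinarith
    have hz1gt : (z2:ℝ) < (z1:ℝ) := by nlinarith
    have hz1gtZ : z2 < z1 := by exact_mod_cast hz1gt
    have hz12 : (2:ℝ) ≤ (z1:ℝ) := by
      have : (2:ℤ) ≤ z1 := by omega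
      exact_mod_cast this
    have hge : T ≤ ⟪δ, R.highest⟫ := by nlinarith
    have := R.eq_highest hδpos hge
    rw [this] at hδlong
    exact absurd hδlong (lt_irrefl _)

lemma cs_strict {γ δ : V} (hγ : γ ∈ R.pos) (hδ : δ ∈ R.pos) (hne : γ ≠ δ) :
    ⟪γ, δ⟫ ^ 2 < ⟪γ, γ⟫ * ⟪δ, δ⟫ := by
  have hδδ : 0 < ⟪δ, δ⟫ := R.inner_self_pos' hδ
  set u := ⟪δ, δ⟫ • γ - ⟪γ, δ⟫ • δ with hu
  have hune : u ≠ 0 := by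
    intro h0
    have h1 : ⟪δ, δ⟫ • γ = ⟪γ, δ⟫ • δ := sub_eq_zero.mp h0
    have h2 : γ = ((⟪δ, δ⟫)⁻¹ * ⟪γ, δ⟫) • δ := by
      calc γ = (⟪δ, δ⟫)⁻¹ • (⟪δ, δ⟫ • γ) := by
              rw [smul_smul, inv_mul_cancel₀ (ne_of_gt hδδ), one_smul]
        _ = (⟪δ, δ⟫)⁻¹ • (⟪γ, δ⟫ • δ) := by rw [h1]
        _ = ((⟪δ, δ⟫)⁻¹ * ⟪γ, δ⟫) • δ := smul_smul _ _ _
    exact hne (R.eq_of_smul hγ hδ h2)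
  have hupos : 0 < ⟪u, u⟫ := by
    rcases (real_inner_self_nonneg (x := u)).lt_or_eq with h1 | h1
    · exact h1
    · exact absurd (inner_self_eq_zero.mp h1.symm) hune
  have hexp : ⟪u, u⟫ = ⟪δ, δ⟫ * (⟪γ, γ⟫ * ⟪δ, δ⟫ - ⟪γ, δ⟫ ^ 2) := by
    rw [hu]
    simp only [inner_sub_left, inner_sub_right, real_inner_smul_left,
      real_inner_smul_right]
    rw [real_inner_comm δ γ]
    ring
  rw [hexp] at hupos
  nlinarith

lemma pairing_bound {γ δ : V} (hγ : γ ∈ R.pos) (hδ : δ ∈ R.pos) (hne : γ ≠ δ)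
    {z w : ℤ} (hz : 2 * ⟪γ, δ⟫ = (z:ℝ) * ⟪δ, δ⟫) (hw : 2 * ⟪δ, γ⟫ = (w:ℝ) * ⟪γ, γ⟫) :
    z * w ≤ 3 := by
  have hγγ : 0 < ⟪γ, γ⟫ := R.inner_self_pos' hγ
  have hδδ : 0 < ⟪δ, δ⟫ := R.inner_self_pos' hδ
  have hcs := R.cs_strict hγ hδ hne
  have hcomm : ⟪δ, γ⟫ = ⟪γ, δ⟫ := real_inner_comm _ _
  rw [hcomm] at hw
  have hkey : ((z*w : ℤ) : ℝ) * (⟪γ, γ⟫ * ⟪δ, δ⟫) = 4 * ⟪γ, δ⟫ ^ 2 := by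
    push_cast
    linear_combination (-(2*⟪γ, δ⟫)) * hz + (-((z:ℝ)*⟪δ, δ⟫)) * hw
  have h4 : ((z*w : ℤ) : ℝ) < 4 := by
    have hprod : 0 < ⟪γ, γ⟫ * ⟪δ, δ⟫ := mul_pos hγγ hδδ
    nlinarith
  have : (z*w : ℤ) < 4 := by exact_mod_cast h4
  omega

lemma root_sub {γ δ : V} (hγ : γ ∈ R.pos) (hδ : δ ∈ R.pos)
    (hinn : 0 < ⟪γ, δ⟫) (hne : γ ≠ δ) :
    γ - δ ∈ R.pos ∨ δ - γ ∈ R.pos := by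
  obtain ⟨z, hz⟩ := R.pairingz hδ hγ
  obtain ⟨w, hw⟩ := R.pairingz hγ hδ
  have hγγ : 0 < ⟪γ, γ⟫ := R.inner_self_pos' hγ
  have hδδ : 0 < ⟪δ, δ⟫ := R.inner_self_pos' hδ
  have hcomm : ⟪δ, γ⟫ = ⟪γ, δ⟫ := real_inner_comm _ _
  have hzpos : (0:ℤ) < z := by
    have : (0:ℝ) < (z:ℝ) := by nlinarith
    exact_mod_cast this
  have hwpos : (0:ℤ) < w := by
    have : (0:ℝ) < (w:ℝ) := by nlinarith
    exact_mod_cast this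
  have hbound := R.pairing_bound hγ hδ hne hz hw
  by_cases hz1 : z = 1
  · rcases R.reflect_mem_z hδ hγ hz with h | h
    · left
      rw [hz1] at h
      simpa using h
    · right
      rw [hz1] at h
      have heq : -(γ - ((1:ℤ):ℝ) • δ) = δ - γ := by
        push_cast
        rw [one_smul, neg_sub]
      rwa [heq] at h
  · have hz2 : 2 ≤ z := by omega
    have hwle : w ≤ 1 := by nlinarith
    have hw1 : w = 1 := by omega
    rcases R.reflect_mem_z hγ hδ hw with h | h
    · right
      rw [hw1] at h
      simpa using h
    · left
      rw [hw1] at h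
      have heq : -(δ - ((1:ℤ):ℝ) • γ) = γ - δ := by
        push_cast
        rw [one_smul, neg_sub]
      rwa [heq] at h

/-- a positive root cannot exceed the highest root -/
lemma not_sub_highest {σ : V} (hσ : σ ∈ R.pos) (h : σ - R.highest ∈ R.pos) :
    False := by
  set x := σ - R.highest with hx
  have hxexp : x = ∑ β ∈ R.simple, ((R.coeff σ β : ℝ) - (R.coeff R.highest β : ℝ)) • β := by
    have := R.sub_smul_expand hσ R.highest_mem 1
    rw [hx]
    rw [show σ - R.highest = σ - (1:ℝ) • R.highest by rw [one_smul]]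
    rw [this]
    exact Finset.sum_congr rfl (fun β _ => by rw [one_mul])
  have hcu := R.coeff_unique h hxexp
  have hle := R.coeff_le_highest hσ
  have : x = 0 := by
    rw [R.coeff_spec x h]
    refine Finset.sum_eq_zero (fun β hβ => ?_)
    have h1 := hcu β hβ
    have h2 := hle β hβ
    have h3 : (0:ℝ) ≤ (R.coeff x β : ℝ) := Nat.cast_nonneg _
    have : (R.coeff x β : ℝ) = 0 := by linarith
    rw [this, zero_smul]
  exact R.root_ne x h this

/-- a pair of positive roots summing to the highest root: `2β + γ = θ` -/
def IsPair (β γ : V) : Prop :=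
  β ∈ R.pos ∧ γ ∈ R.pos ∧ (2:ℝ) • β + γ = R.highest

lemma exists_pair (hSL : ¬ R.SimplyLaced) : ∃ β γ, R.IsPair β γ := by
  classical
  set T := ⟪R.highest, R.highest⟫ with hT
  have hTpos : 0 < T := R.inner_self_pos' R.highest_mem
  -- a short root exists
  have hshort : ∃ ε ∈ R.pos, ⟪ε, ε⟫ < T := by
    unfold SimplyLaced at hSL
    push_neg at hSL
    obtain ⟨x, hx, y, hy, hxy⟩ := hSL
    have hxn : ⟪x, x⟫ ≠ ⟪y, y⟫ := by
      intro h
      apply hxy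
      have h1 : ‖x‖ * ‖x‖ = ‖y‖ * ‖y‖ := by
        rw [← real_inner_self_eq_norm_mul_norm, ← real_inner_self_eq_norm_mul_norm, h]
      exact (mul_self_inj_of_nonneg (norm_nonneg x) (norm_nonneg y)).mp h1
    rcases hxn.lt_or_gt with h | h
    · exact ⟨x, hx, lt_of_lt_of_le h (R.theta_long hy)⟩
    · exact ⟨y, hy, lt_of_lt_of_le h (R.theta_long hx)⟩
  set Sh := R.pos.filter (fun x => ⟪x, x⟫ < T) with hSh
  have hShne : Sh.Nonempty := by
    obtain ⟨ε, h1, h2⟩ := hshort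
    exact ⟨ε, Finset.mem_filter.mpr ⟨h1, h2⟩⟩
  obtain ⟨σ, hσM, hσmax⟩ := Finset.exists_max_image Sh R.ht hShne
  have hσpos : σ ∈ R.pos := (Finset.mem_filter.mp hσM).1
  have hσshort : ⟪σ, σ⟫ < T := (Finset.mem_filter.mp hσM).2
  have hσθ : 0 < ⟪R.highest, σ⟫ := by
    rcases lt_or_ge (0:ℝ) ⟪R.highest, σ⟫ with h | h
    · exact h
    · exfalso
      obtain ⟨σ', hσ'pos, hσ'norm, hσ'ht⟩ := R.bump hσpos h
      have : σ' ∈ Sh := Finset.mem_filter.mpr ⟨hσ'pos, by rw [hσ'norm]; exact hσshort⟩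
      exact absurd (hσmax σ' this) (not_le.mpr hσ'ht)
  have hσne : σ ≠ R.highest := by
    intro h; rw [h] at hσshort; exact absurd hσshort (lt_irrefl _)
  -- pairings
  obtain ⟨z, hz⟩ := R.pairingz hσpos R.highest_mem   -- 2⟪θ,σ⟫ = z⟪σ,σ⟫
  obtain ⟨w, hw⟩ := R.pairingz R.highest_mem hσpos   -- 2⟪σ,θ⟫ = w⟪θ,θ⟫
  have hσσ : 0 < ⟪σ, σ⟫ := R.inner_self_pos' hσpos
  have hcomm : ⟪σ, R.highest⟫ = ⟪R.highest, σ⟫ := real_inner_comm _ _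
  have hwpos : (0:ℤ) < w := by
    have : (0:ℝ) < (w:ℝ) := by nlinarith
    exact_mod_cast this
  have hzgtw : w < z := by
    have : (w:ℝ) < (z:ℝ) := by
      nlinarith [mul_pos (show (0:ℝ) < (w:ℝ) by exact_mod_cast hwpos)
        (sub_pos.mpr hσshort)]
    exact_mod_cast this
  have hbound3 : z * w ≤ 3 := R.pairing_bound R.highest_mem hσpos
    (Ne.symm hσne) hz hw
  have hz2 : 2 ≤ z := by omega
  have hzle3 : z ≤ 3 := by nlinarith [hbound3, hwpos]
  -- θ - σ ∈ pos
  have hθσ : R.highest - σ ∈ R.pos := by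
    rcases R.root_sub R.highest_mem hσpos hσθ (fun h => hσne h.symm) with h | h
    · exact h
    · exact absurd h (fun hh => R.not_sub_highest hσpos hh)
  -- θ - 2σ ∈ ±pos
  have hkey : R.highest - (2:ℝ) • σ ∈ R.pos ∨ -(R.highest - (2:ℝ) • σ) ∈ R.pos := by
    interval_cases z
    · -- z = 2
      have h := R.reflect_mem_z hσpos R.highest_mem hz
      have hcast : ((2:ℤ):ℝ) = (2:ℝ) := by norm_num
      rw [hcast] at h
      exact h
    · -- z = 3 : reflect θ-σ
      have hpair : 2 * ⟪R.highest - σ, σ⟫ = ((1:ℤ):ℝ) * ⟪σ, σ⟫ := by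
        rw [inner_sub_left]
        push_cast
        push_cast at hz
        linarith
      have h := R.reflect_mem_z hσpos hθσ hpair
      have : R.highest - σ - ((1:ℤ):ℝ) • σ = R.highest - (2:ℝ) • σ := by
        push_cast
        rw [one_smul, two_smul]
        abel
      rwa [this] at h
  rcases hkey with h | h
  · exact ⟨σ, R.highest - (2:ℝ) • σ, hσpos, h, by module⟩
  · exact ⟨R.highest - σ, -(R.highest - (2:ℝ) • σ), hθσ, h, by module⟩

lemma pos_add_ne_simple {γ x α : V} (hγ : γ ∈ R.pos) (hx : x ∈ R.pos)
    (hα : α ∈ R.simple) (hγα : γ ≠ α) : γ + x ≠ α := by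
  intro h
  have hsum : ∑ β ∈ R.simple, ((R.coeff γ β : ℝ) + (R.coeff x β : ℝ)) • β
      = ∑ β ∈ R.simple, ((1:ℝ) * if β = α then 1 else 0) • β := by
    rw [R.single_sum hα 1, one_smul, ← h]
    conv_rhs => rw [R.coeff_spec γ hγ, R.coeff_spec x hx]
    rw [← Finset.sum_add_distrib]
    exact Finset.sum_congr rfl (fun β _ => add_smul _ _ β)
  have hco := R.eq_coeffs hsum
  have hz : ∀ β ∈ R.simple, β ≠ α → (R.coeff γ β : ℝ) = 0 := by
    intro β hβ hne
    have hk := hco β hβ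
    rw [if_neg hne, mul_zero] at hk
    have h1 : (0:ℝ) ≤ (R.coeff γ β : ℝ) := Nat.cast_nonneg _
    have h3 : (0:ℝ) ≤ (R.coeff x β : ℝ) := Nat.cast_nonneg _
    linarith
  have hmul : γ = (R.coeff γ α : ℝ) • α := by
    conv_lhs => rw [R.coeff_spec γ hγ]
    rw [Finset.sum_eq_single α]
    · intro β hβ hne; rw [hz β hβ hne, zero_smul]
    · intro hc; exact absurd hα hc
  exact hγα (R.eq_of_smul hγ (R.simple_sub hα) hmul)

lemma pair_descent {β γ : V} (hp : R.IsPair β γ) (hγns : γ ∉ R.simple) :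
    ∃ β' γ', R.IsPair β' γ' ∧ R.ht γ' < R.ht γ := by
  obtain ⟨hβ, hγ, hsum⟩ := hp
  have hθ : R.highest ∈ R.pos := R.highest_mem
  have hTpos : 0 < ⟪R.highest, R.highest⟫ := R.inner_self_pos' hθ
  have hγγ : 0 < ⟪γ, γ⟫ := R.inner_self_pos' hγ
  -- θ-inner splits
  have hsplit : ⟪R.highest, R.highest⟫ = 2 * ⟪R.highest, β⟫ + ⟪R.highest, γ⟫ := by
    have h1 : ⟪R.highest, (2:ℝ) • β + γ⟫ = 2 * ⟪R.highest, β⟫ + ⟪R.highest, γ⟫ := by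
      rw [inner_add_right, real_inner_smul_right]
    rw [← h1, hsum]
  have hθγ0 : 0 ≤ ⟪R.highest, γ⟫ := R.theta_inner_nonneg hγ
  have hθβ0 : 0 ≤ ⟪R.highest, β⟫ := R.theta_inner_nonneg hβ
  -- ⟪θ,γ⟫ = 0
  have hθγ : ⟪R.highest, γ⟫ = 0 := by
    obtain ⟨k, hk⟩ := R.pairingz hθ hβ
    have hcomm : ⟪β, R.highest⟫ = ⟪R.highest, β⟫ := real_inner_comm _ _
    have hk0 : 0 ≤ k := by
      have : (0:ℝ) ≤ (k:ℝ) := by nlinarith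
      exact_mod_cast this
    rcases (by omega : k = 0 ∨ 1 ≤ k) with hk1 | hk1
    · exfalso
      have hβθ : ⟪R.highest, β⟫ = 0 := by
        rw [hk1] at hk
        push_cast at hk
        linarith
      have hγθT : ⟪R.highest, R.highest⟫ ≤ ⟪γ, R.highest⟫ := by
        have h9 : ⟪γ, R.highest⟫ = ⟪R.highest, γ⟫ := real_inner_comm _ _
        rw [h9]
        linarith
      have hγeq := R.eq_highest hγ hγθT
      have hβ0 : β = (0:V) := by
        have h2 : (2:ℝ) • β = 0 := by
          rw [hγeq] at hsum
          have h3 : (2:ℝ) • β + R.highest = 0 + R.highest := by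
            rw [zero_add]; exact hsum
          exact add_right_cancel h3
        rcases smul_eq_zero.mp h2 with h | h
        · norm_num at h
        · exact h
      exact R.root_ne β hβ hβ0
    · have : (1:ℝ) ≤ (k:ℝ) := by exact_mod_cast hk1
      nlinarith
  -- ⟪β,γ⟫ < 0
  have hβγ : ⟪β, γ⟫ < 0 := by
    have h1 : ⟪(2:ℝ) • β + γ, γ⟫ = 2 * ⟪β, γ⟫ + ⟪γ, γ⟫ := by
      rw [inner_add_left, real_inner_smul_left]
    rw [hsum] at h1
    linarith [hθγ ▸ h1]
  -- find the simple root α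
  have hexα : ∃ α ∈ R.simple, 0 < ⟪γ, α⟫ ∧ ⟪β, α⟫ < 0 := by
    by_contra hno
    push_neg at hno
    have hall : ∀ α ∈ R.simple, 0 ≤ ⟪β, α⟫ := by
      intro α hα
      rcases lt_or_ge (0:ℝ) ⟪γ, α⟫ with h | h
      · exact hno α hα h
      · have hθα := R.theta_dom α hα
        have hsplitα : ⟪R.highest, α⟫ = 2 * ⟪β, α⟫ + ⟪γ, α⟫ := by
          have h1 : ⟪(2:ℝ) • β + γ, α⟫ = 2 * ⟪β, α⟫ + ⟪γ, α⟫ := by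
            rw [inner_add_left, real_inner_smul_left]
          rw [hsum] at h1
          exact h1
        linarith
    have : 0 ≤ ⟪β, γ⟫ := by
      rw [R.inner_expand hγ β]
      exact Finset.sum_nonneg (fun α hα =>
        mul_nonneg (Nat.cast_nonneg _) (hall α hα))
    linarith
  obtain ⟨α, hα, hγα, hβα⟩ := hexα
  have hαpos := R.simple_sub hα
  have hαα : 0 < ⟪α, α⟫ := R.inner_self_pos' hαpos
  have hγnα : γ ≠ α := fun h => hγns (h ▸ hα)
  have hβnα : β ≠ α := by
    intro h
    rw [h] at hβα
    linarith
  -- integers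
  obtain ⟨g, hg⟩ := R.pairingz hαpos hγ
  obtain ⟨w, hw⟩ := R.pairingz hγ hαpos
  obtain ⟨b, hb⟩ := R.pairingz hαpos hβ
  obtain ⟨a, ha⟩ := R.pairingz hαpos hθ
  have hgpos : (0:ℤ) < g := by
    have : (0:ℝ) < (g:ℝ) := by nlinarith
    exact_mod_cast this
  have hwpos : (0:ℤ) < w := by
    have hcm : ⟪α, γ⟫ = ⟪γ, α⟫ := real_inner_comm _ _
    have : (0:ℝ) < (w:ℝ) := by nlinarith
    exact_mod_cast this
  have hbneg : b < 0 := by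
    have : (b:ℝ) < 0 := by nlinarith
    exact_mod_cast this
  have ha0 : 0 ≤ a := by
    have hθα := R.theta_dom α hα
    have : (0:ℝ) ≤ (a:ℝ) := by nlinarith
    exact_mod_cast this
  have hrel : a = 2 * b + g := by
    have hsplitα : ⟪R.highest, α⟫ = 2 * ⟪β, α⟫ + ⟪γ, α⟫ := by
      have h1 : ⟪(2:ℝ) • β + γ, α⟫ = 2 * ⟪β, α⟫ + ⟪γ, α⟫ := by
        rw [inner_add_left, real_inner_smul_left]
      rw [hsum] at h1
      exact h1
    have hcast : (a:ℝ) = 2 * (b:ℝ) + (g:ℝ) := by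
      have h1 : (a:ℝ) * ⟪α, α⟫ = (2 * (b:ℝ) + (g:ℝ)) * ⟪α, α⟫ := by
        nlinarith [hsplitα, ha, hb, hg]
      exact mul_right_cancel₀ (ne_of_gt hαα) h1
    exact_mod_cast hcast
  have hbound := R.pairing_bound hγ hαpos hγnα hg hw
  have hgle3 : g ≤ 3 := by nlinarith
  have hbm1 : b = -1 := by omega
  have hg2 : g = a + 2 := by omega
  -- β + α ∈ pos
  have hβ' : β + α ∈ R.pos := by
    have h := R.reflect_pos hβ hα hβnα hb
    rw [hbm1] at h
    have heq : β - ((-1:ℤ):ℝ) • α = β + α := by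
      push_cast
      rw [neg_smul, one_smul, sub_neg_eq_add]
    rwa [heq] at h
  -- γ - 2α ∈ pos
  have hγ' : γ - (2:ℝ) • α ∈ R.pos := by
    have hgrange : g = 2 ∨ g = 3 := by omega
    rcases hgrange with hge | hge
    · have h := R.reflect_pos hγ hα hγnα hg
      rw [hge] at h
      have heq : γ - ((2:ℤ):ℝ) • α = γ - (2:ℝ) • α := by push_cast; rfl
      rwa [heq] at h
    · -- g = 3 : two steps
      have hγmα : γ - α ∈ R.pos := by
        rcases R.root_sub hγ hαpos hγα hγnα with h | h
        · exact h
        · exfalso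
          have h5 : γ + (α - γ) = α := by abel
          exact R.pos_add_ne_simple hγ h hα hγnα h5
      have hδnα : γ - α ≠ α := by
        intro h
        have h2 : γ = (2:ℝ) • α := by
          have h3 : γ = α + α := eq_add_of_sub_eq h
          rw [h3, two_smul]
        exact hγnα (R.eq_of_smul hγ hαpos h2)
      have hpair1 : 2 * ⟪γ - α, α⟫ = ((1:ℤ):ℝ) * ⟪α, α⟫ := by
        rw [inner_sub_left]
        push_cast
        rw [hge] at hg
        push_cast at hg
        linarith
      have h := R.reflect_pos hγmα hα hδnα hpair1
      have heq : γ - α - ((1:ℤ):ℝ) • α = γ - (2:ℝ) • α := by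
        push_cast
        rw [one_smul, two_smul]
        abel
      rwa [heq] at h
  -- assemble the new pair
  refine ⟨β + α, γ - (2:ℝ) • α, ⟨hβ', hγ', ?_⟩, ?_⟩
  · rw [← hsum]; module
  · have hhts := R.ht_shift hγ hγ' hα (t := (2:ℝ)) rfl
    have hfin : (R.ht (γ - (2:ℝ) • α) : ℝ) < (R.ht γ : ℝ) := by rw [hhts]; linarith
    exact_mod_cast hfin

lemma exists_simple_pair (hSL : ¬ R.SimplyLaced) :
    ∃ β α, α ∈ R.simple ∧ R.IsPair β α := by
  classical
  obtain ⟨β0, γ0, hp0⟩ := R.exists_pair hSL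
  set Pγ := R.pos.filter (fun γ => ∃ β, R.IsPair β γ) with hPγ
  have hne : Pγ.Nonempty := ⟨γ0, Finset.mem_filter.mpr ⟨hp0.2.1, β0, hp0⟩⟩
  obtain ⟨γ, hγP, hγmin⟩ := Finset.exists_min_image Pγ R.ht hne
  obtain ⟨hγpos, β, hp⟩ := Finset.mem_filter.mp hγP
  by_cases hs : γ ∈ R.simple
  · exact ⟨β, γ, hs, hp⟩
  · obtain ⟨β', γ', hp', hlt⟩ := R.pair_descent hp hs
    have : γ' ∈ Pγ := Finset.mem_filter.mpr ⟨hp'.2.1, β', hp'⟩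
    exact absurd (hγmin γ' this) (not_le.mpr hlt)

/-- final packaging: from a simple pair, all desired structure -/
lemma pair_coeff {β α : V} (hα : α ∈ R.simple) (hβpos : β ∈ R.pos)
    (hsum : (2:ℝ) • β + α = R.highest) :
    ∀ δ ∈ R.simple,
      (R.coeff R.highest δ : ℝ) = 2 * (R.coeff β δ : ℝ) + (if δ = α then 1 else 0) := by
  have hexp : R.highest
      = ∑ δ ∈ R.simple, (2 * (R.coeff β δ : ℝ) + (1 * if δ = α then 1 else 0)) • δ := by
    rw [← hsum]
    have h1 : (2:ℝ) • β = ∑ δ ∈ R.simple, (2 * (R.coeff β δ : ℝ)) • δ := by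
      conv_lhs => rw [R.coeff_spec β hβpos]
      rw [Finset.smul_sum]
      exact Finset.sum_congr rfl (fun δ _ => smul_smul 2 _ δ)
    rw [h1]
    conv_lhs => rw [← one_smul ℝ α]
    rw [← R.single_sum hα 1, ← Finset.sum_add_distrib]
    exact Finset.sum_congr rfl (fun δ _ => (add_smul _ _ δ).symm)
  intro δ hδ
  have := R.coeff_unique R.highest_mem hexp δ hδ
  rw [one_mul] at this
  exact this.symm

lemma pair_ceil {β α : V} (hα : α ∈ R.simple) (hβpos : β ∈ R.pos)
    (hsum : (2:ℝ) • β + α = R.highest) : β + α ∈ R.pos := by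
  have hαpos := R.simple_sub hα
  have hαα : 0 < ⟪α, α⟫ := R.inner_self_pos' hαpos
  have hθ := R.highest_mem
  have hβnα : β ≠ α := by
    intro h
    rw [h] at hsum
    have h3 : R.highest = (3:ℝ) • α := by
      rw [← hsum]
      module
    have h4 := R.eq_of_smul hθ hαpos h3
    rw [h4] at h3
    have h5 : (2:ℝ) • α = 0 := by
      have : α = (3:ℝ) • α := h3
      have h6 : (3:ℝ) • α - α = 0 := by rw [← this]; abel
      rw [show (3:ℝ) • α - α = (2:ℝ) • α by module] at h6
      exact h6
    rcases smul_eq_zero.mp h5 with h | h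
    · norm_num at h
    · exact R.root_ne α hαpos h
  -- the pairing of β against α
  obtain ⟨b, hb⟩ := R.pairingz hαpos hβpos
  obtain ⟨a, ha⟩ := R.pairingz hαpos hθ
  have hθα : ⟪R.highest, α⟫ = 2 * ⟪β, α⟫ + ⟪α, α⟫ := by
    have h1 : ⟪(2:ℝ) • β + α, α⟫ = 2 * ⟪β, α⟫ + ⟪α, α⟫ := by
      rw [inner_add_left, real_inner_smul_left]
    rw [hsum] at h1
    exact h1
  -- β,α inner negative
  have hβα : ⟪β, α⟫ < 0 := by
    rcases lt_or_ge ⟪β, α⟫ 0 with h | h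
    · exact h
    · exfalso
      have hθαpos : 0 < ⟪R.highest, α⟫ := by linarith
      have hθnα : R.highest ≠ α := by
        intro hh
        have h2 : (2:ℝ) • β = 0 := by
          have h3 : (2:ℝ) • β + α = α := by rw [hsum, hh]
          have h4 : (2:ℝ) • β + α = 0 + α := by rw [zero_add]; exact h3
          exact add_right_cancel h4
        rcases smul_eq_zero.mp h2 with h | h
        · norm_num at h
        · exact R.root_ne β hβpos h
      rcases R.root_sub hθ hαpos hθαpos hθnα with h1 | h1
      · have h2 : R.highest - α = (2:ℝ) • β := by
          rw [← hsum]; module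
        rw [h2] at h1
        exact R.reduced β hβpos h1
      · exact R.not_sub_highest hαpos h1
  have hbneg : b < 0 := by
    have : (b:ℝ) < 0 := by nlinarith
    exact_mod_cast this
  have ha2b : a = 2 * b + 2 := by
    have hcast : (a:ℝ) = 2 * (b:ℝ) + 2 := by
      have h1 : (a:ℝ) * ⟪α, α⟫ = (2 * (b:ℝ) + 2) * ⟪α, α⟫ := by
        nlinarith [hθα, ha, hb]
      exact mul_right_cancel₀ (ne_of_gt hαα) h1
    exact_mod_cast hcast
  have ha0 : 0 ≤ a := by
    have hθd := R.theta_dom α hα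
    have : (0:ℝ) ≤ (a:ℝ) := by nlinarith
    exact_mod_cast this
  have hbm1 : b = -1 := by omega
  have h := R.reflect_pos hβpos hα hβnα hb
  rw [hbm1] at h
  have heq : β - ((-1:ℤ):ℝ) • α = β + α := by
    push_cast
    rw [neg_smul, one_smul, sub_neg_eq_add]
  rwa [heq] at h

lemma stmt19_main (hSL : ¬ R.SimplyLaced) :
    ({γ : V | γ ∈ R.pos ∧ R.rle R.floorTheta γ ∧
        R.rle γ (R.highest - R.floorTheta)} : Set V) =
      {R.floorTheta, R.highest - R.floorTheta} ∧
    2 * (∑ α ∈ R.simple, (R.coeff R.highest α - R.coeff R.highest α / 2)) =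
      R.ht R.highest + 1 := by
  obtain ⟨β, α, hα, hβpos, hαpos2, hsum⟩ := R.exists_simple_pair hSL
  have hθ := R.highest_mem
  have hcoeffR := R.pair_coeff hα hβpos hsum
  have hcoeffN : ∀ δ ∈ R.simple,
      R.coeff R.highest δ = 2 * R.coeff β δ + (if δ = α then 1 else 0) := by
    intro δ hδ
    have h1 := hcoeffR δ hδ
    by_cases hd : δ = α
    · rw [if_pos hd] at h1 ⊢
      exact_mod_cast h1
    · rw [if_neg hd] at h1 ⊢
      exact_mod_cast h1
  have hfloor : R.floorTheta = β := by
    unfold floorTheta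
    have h2 : ∀ δ ∈ R.simple, R.coeff R.highest δ / 2 = R.coeff β δ := by
      intro δ hδ
      have h3 := hcoeffN δ hδ
      by_cases hd : δ = α
      · rw [if_pos hd] at h3; omega
      · rw [if_neg hd] at h3; omega
    calc ∑ δ ∈ R.simple, ((R.coeff R.highest δ / 2 : ℕ) : ℝ) • δ
        = ∑ δ ∈ R.simple, ((R.coeff β δ : ℕ) : ℝ) • δ :=
          Finset.sum_congr rfl (fun δ hδ => by rw [h2 δ hδ])
      _ = β := (R.coeff_spec β hβpos).symm
  have hceilpos : β + α ∈ R.pos := R.pair_ceil hα hβpos hsum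
  have hceil : R.highest - R.floorTheta = β + α := by
    rw [hfloor, ← hsum]; module
  have hindsum : ∑ δ ∈ R.simple, (((if δ = α then 1 else 0 : ℕ)) : ℝ) • δ = α := by
    have h3 : ∀ δ ∈ R.simple, (((if δ = α then 1 else 0 : ℕ)) : ℝ) • δ
        = ((1:ℝ) * if δ = α then 1 else 0) • δ := by
      intro δ _; by_cases hd : δ = α <;> simp [hd]
    rw [Finset.sum_congr rfl h3, R.single_sum hα 1, one_smul]
  constructor
  · ext x
    simp only [Set.mem_setOf_eq, Set.mem_insert_iff, Set.mem_singleton_iff]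
    constructor
    · rintro ⟨hx, ⟨c, hc⟩, ⟨d, hd⟩⟩
      rw [hfloor] at hc
      rw [hceil] at hd
      have hcd : ∀ δ ∈ R.simple, (c δ : ℝ) + (d δ : ℝ)
          = (1:ℝ) * if δ = α then 1 else 0 := by
        refine R.eq_coeffs (f := fun δ => (c δ : ℝ) + (d δ : ℝ))
          (g := fun δ => (1:ℝ) * if δ = α then 1 else 0) ?_
        have h4 : ∑ δ ∈ R.simple, ((c δ:ℝ) + (d δ:ℝ)) • δ
            = (∑ δ ∈ R.simple, (c δ:ℝ) • δ) + (∑ δ ∈ R.simple, (d δ:ℝ) • δ) := by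
          rw [← Finset.sum_add_distrib]
          exact Finset.sum_congr rfl (fun δ _ => add_smul _ _ δ)
        rw [h4, ← hc, ← hd, R.single_sum hα 1, one_smul]
        abel
      have hcall : ∀ δ ∈ R.simple, δ ≠ α → (c δ : ℝ) = 0 := by
        intro δ hδ hne
        have h5 := hcd δ hδ
        rw [if_neg hne, mul_zero] at h5
        have h6 : (0:ℝ) ≤ (c δ:ℝ) := Nat.cast_nonneg _
        have h7 : (0:ℝ) ≤ (d δ:ℝ) := Nat.cast_nonneg _
        linarith
      have h7 : ∑ δ ∈ R.simple, (c δ:ℝ) • δ = (c α:ℝ) • α := by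
        rw [Finset.sum_eq_single α]
        · intro δ hδ hne; rw [hcall δ hδ hne, zero_smul]
        · intro hcon; exact absurd hα hcon
      have hsumc : x = β + (c α : ℝ) • α := by
        have h9 := eq_add_of_sub_eq hc
        rw [h7] at h9
        rw [h9]; abel
      have hca : c α = 0 ∨ c α = 1 := by
        have h10 := hcd α hα
        rw [if_pos rfl, mul_one] at h10
        have h11 : c α + d α = 1 := by exact_mod_cast h10
        omega
      rcases hca with h8 | h8
      · left
        rw [hfloor, hsumc, h8]
        simp
      · right
        rw [hceil, hsumc, h8]
        simp
    · intro hx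
      rcases hx with h8 | h8
      · refine ⟨by rw [h8, hfloor]; exact hβpos, ⟨fun _ => 0, by rw [h8]; simp⟩, ?_⟩
        refine ⟨fun δ => if δ = α then 1 else 0, ?_⟩
        rw [h8, hceil, hfloor, hindsum]
        abel
      · refine ⟨by rw [h8, hceil]; exact hceilpos, ?_, ⟨fun _ => 0, by rw [h8]; simp⟩⟩
        refine ⟨fun δ => if δ = α then 1 else 0, ?_⟩
        rw [h8, hceil, hfloor, hindsum]
        abel
  · have h1 : ∀ δ ∈ R.simple, R.coeff R.highest δ - R.coeff R.highest δ / 2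
        = R.coeff β δ + (if δ = α then 1 else 0) := by
      intro δ hδ
      have h3 := hcoeffN δ hδ
      by_cases hd : δ = α
      · rw [if_pos hd] at h3 ⊢; omega
      · rw [if_neg hd] at h3 ⊢; omega
    have h2 : ∑ δ ∈ R.simple, (if δ = α then 1 else 0) = 1 := by
      rw [Finset.sum_ite_eq' R.simple α (fun _ => (1:ℕ)), if_pos hα]
    have h3 : R.ht R.highest = 2 * (∑ δ ∈ R.simple, R.coeff β δ) + 1 := by
      unfold ht
      rw [Finset.sum_congr rfl hcoeffN, Finset.sum_add_distrib, h2, ← Finset.mul_sum]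
    rw [Finset.sum_congr rfl h1, Finset.sum_add_distrib, h2, h3]
    ring

end Lemmas

end SimpleRS

/-- for `Δ` irreducible and not simply laced (types `B`, `C`, `F₄`, `G₂`),
the interval `{γ ∈ Δ⁺ : ⌊θ/2⌋ ≼ γ ≼ ⌈θ/2⌉}` equals `{⌊θ/2⌋, ⌈θ/2⌉}`, and
`ht(⌈θ/2⌉) = h/2` (i.e. `2·ht(⌈θ/2⌉) = h`), where `h = ht(θ) + 1` is the Coxeter
number. -/
theorem stmt19 {V : Type*} [NormedAddCommGroup V] [InnerProductSpace ℝ V]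
    (R : SimpleRS V) (hSL : ¬ R.SimplyLaced) :
    ({γ : V | γ ∈ R.pos ∧ R.rle R.floorTheta γ ∧
        R.rle γ (R.highest - R.floorTheta)} : Set V) =
      {R.floorTheta, R.highest - R.floorTheta} ∧
    2 * (∑ α ∈ R.simple, (R.coeff R.highest α - R.coeff R.highest α / 2)) =
      R.ht R.highest + 1 := by
  exact R.stmt19_main hSL
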